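/- arXiv:1006.1485 — 2 statements merged into one kernel-verified Lean document; each statement's English description precedes it below -/
import Mathlib

section
/- Assume d ≥ 1 and 2 + 4/d < p + 1 < 2*. Let ψ₀ ∈ PW₋ and let ψ be the corresponding H¹ solution of 2i∂ₜψ + Δψ + |ψ|^{p−1}ψ = 0. Then 𝒦(ψ(t)) < −(ℬ(ψ₀) − ℋ(ψ₀)) < 0 for all t in the maximal existence interval; in particular ψ(t) stays in PW₋. -/
open MeasureTheory Filter Set
open scoped ENNReal Topology

noncomputable section

abbrev Euc (d : ℕ) := EuclideanSpace ℝ (Fin d)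

def gradSq (d : ℕ) (f : Euc d → ℂ) : ℝ := ∫ x, ‖fderiv ℝ f x‖ ^ 2

def ppow (d : ℕ) (q : ℝ) (f : Euc d → ℂ) : ℝ := ∫ x, ‖f x‖ ^ q

def l2norm (d : ℕ) (f : Euc d → ℂ) : ℝ := Real.sqrt (ppow d 2 f)

def InH1 (d : ℕ) (f : Euc d → ℂ) : Prop :=
  MemLp f 2 (volume : Measure (Euc d)) ∧ Differentiable ℝ f ∧
    Integrable (fun x => ‖fderiv ℝ f x‖ ^ 2) (volume : Measure (Euc d))

def Hfun (d : ℕ) (p : ℝ) (f : Euc d → ℂ) : ℝ :=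
  gradSq d f - (2 / (p + 1)) * ppow d (p + 1) f

def Kfun (d : ℕ) (p : ℝ) (f : Euc d → ℂ) : ℝ :=
  gradSq d f - ((d : ℝ) * (p - 1) / (2 * (p + 1))) * ppow d (p + 1) f

def Adm (d : ℕ) (p : ℝ) (f : Euc d → ℂ) : Prop :=
  InH1 d f ∧ MemLp f (ENNReal.ofReal (p + 1)) (volume : Measure (Euc d)) ∧
    ¬ (f =ᵐ[(volume : Measure (Euc d))] (0 : Euc d → ℂ))

def N2fun (d : ℕ) (p : ℝ) (f : Euc d → ℂ) : ℝ :=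
  l2norm d f ^ (p + 1 - (d : ℝ) * (p - 1) / 2) *
    Real.sqrt (gradSq d f) ^ ((d : ℝ) * (p - 1) / 2 - 2)

def N2val (d : ℕ) (p : ℝ) : ℝ :=
  sInf {r : ℝ | ∃ f : Euc d → ℂ, Adm d p f ∧ Kfun d p f ≤ 0 ∧ r = N2fun d p f}

def Bfun (d : ℕ) (p : ℝ) (f : Euc d → ℂ) : ℝ :=
  (((d : ℝ) * (p - 1) - 4) / ((d : ℝ) * (p - 1))) *
    (N2val d p / l2norm d f ^ (p + 1 - (d : ℝ) * (p - 1) / 2)) ^ (4 / ((d : ℝ) * (p - 1) - 4))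

lemma gradSq_nonneg (d : ℕ) (f : Euc d → ℂ) : 0 ≤ gradSq d f :=
  integral_nonneg fun x => by positivity

lemma N2fun_nonneg (d : ℕ) (p : ℝ) (f : Euc d → ℂ) : 0 ≤ N2fun d p f :=
  mul_nonneg (Real.rpow_nonneg (Real.sqrt_nonneg _) _)
    (Real.rpow_nonneg (Real.sqrt_nonneg _) _)

lemma ppow2_pos (d : ℕ) (f : Euc d → ℂ) (hf : MemLp f 2 (volume : Measure (Euc d)))
    (hne : ¬ (f =ᵐ[(volume : Measure (Euc d))] (0 : Euc d → ℂ))) :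
    0 < ppow d 2 f := by
  have hint : Integrable (fun x => ‖f x‖ ^ (2:ℝ)) (volume : Measure (Euc d)) := by
    simpa using hf.integrable_norm_rpow two_ne_zero ENNReal.ofNat_ne_top
  have hnn : 0 ≤ fun x : Euc d => ‖f x‖ ^ (2:ℝ) :=
    fun x => Real.rpow_nonneg (norm_nonneg _) _
  have h0 : 0 ≤ ppow d 2 f := integral_nonneg hnn
  rcases h0.lt_or_eq with h | h
  · exact h
  · exfalso
    apply hne
    have hz : (fun x => ‖f x‖ ^ (2:ℝ)) =ᵐ[(volume : Measure (Euc d))] 0 :=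
      (integral_eq_zero_iff_of_nonneg hnn hint).mp h.symm
    filter_upwards [hz] with x hx
    have : ‖f x‖ = 0 :=
      (Real.rpow_eq_zero (norm_nonneg _) (by norm_num : (2:ℝ) ≠ 0)).mp hx
    simpa using this

lemma ppow2_ne_ae (d : ℕ) (f : Euc d → ℂ) (h : 0 < ppow d 2 f) :
    ¬ (f =ᵐ[(volume : Measure (Euc d))] (0 : Euc d → ℂ)) := by
  intro hae
  have : ppow d 2 f = 0 := by
    unfold ppow
    rw [integral_congr_ae (g := fun _ => (0:ℝ))]
    · simp
    · filter_upwards [hae] with x hx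
      simp [hx, Real.zero_rpow (by norm_num : (2:ℝ) ≠ 0)]
  linarith

lemma Hfun_lin (d : ℕ) (p : ℝ) (f : Euc d → ℂ) (hp : p + 1 ≠ 0) :
    (d : ℝ) * (p - 1) * Hfun d p f =
      ((d : ℝ) * (p - 1) - 4) * gradSq d f + 4 * Kfun d p f := by
  unfold Hfun Kfun
  field_simp
  ring

/-- Key variational lemma. -/
lemma keyA (d : ℕ) (p : ℝ) (hβ : 4 < (d : ℝ) * (p - 1)) (hp : (0:ℝ) < p + 1)
    (f : Euc d → ℂ) (hAdm : Adm d p f) (hKle : Kfun d p f ≤ 0)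
    (hHB : Hfun d p f < Bfun d p f) :
    Kfun d p f < Hfun d p f - Bfun d p f := by
  by_contra hcon
  push_neg at hcon
  set β := (d : ℝ) * (p - 1) with hβdef
  have hβ0 : (0:ℝ) < β := by linarith
  have hG : 0 ≤ gradSq d f := gradSq_nonneg d f
  have hl2 : 0 < l2norm d f :=
    Real.sqrt_pos.mpr (ppow2_pos d f hAdm.1.1 hAdm.2.2)
  set M := l2norm d f ^ (p + 1 - β / 2) with hMdef
  have hM : 0 < M := Real.rpow_pos_of_pos hl2 _
  set S := {r : ℝ | ∃ g : Euc d → ℂ, Adm d p g ∧ Kfun d p g ≤ 0 ∧ r = N2fun d p g}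
    with hSdef
  have hmem : N2fun d p f ∈ S := ⟨f, hAdm, hKle, rfl⟩
  have hSbdd : BddBelow S := by
    refine ⟨0, fun r hr => ?_⟩
    obtain ⟨g, _, _, rfl⟩ := hr
    exact N2fun_nonneg d p g
  have hNle : N2val d p ≤ N2fun d p f := csInf_le hSbdd hmem
  have hN0 : 0 ≤ N2val d p := by
    refine le_csInf ⟨_, hmem⟩ (fun r hr => ?_)
    obtain ⟨g, _, _, rfl⟩ := hr
    exact N2fun_nonneg d p g
  set C := (N2val d p / M) ^ (4 / (β - 4)) with hCdef
  have hBval : Bfun d p f = ((β - 4) / β) * C := rfl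
  have hB' : β * Bfun d p f = (β - 4) * C := by
    rw [hBval]; field_simp
  have h1 : β * Hfun d p f = (β - 4) * gradSq d f + 4 * Kfun d p f :=
    Hfun_lin d p f hp.ne'
  have hGC : gradSq d f < C := by
    nlinarith [mul_lt_mul_of_pos_left hHB (show (0:ℝ) < β - 4 by linarith),
      mul_le_mul_of_nonneg_left hcon (show (0:ℝ) ≤ 4 by norm_num)]
  have hN2 : N2fun d p f = M * gradSq d f ^ ((β - 4) / 4) := by
    unfold N2fun
    rw [Real.sqrt_eq_rpow, ← Real.rpow_mul hG]
    congr 1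
    rw [hβdef]; ring
  have hpow : gradSq d f ^ ((β - 4) / 4) < C ^ ((β - 4) / 4) :=
    Real.rpow_lt_rpow hG hGC (div_pos (by linarith) (by norm_num))
  have hCpow : C ^ ((β - 4) / 4) = N2val d p / M := by
    have h4 : β - 4 ≠ 0 := by linarith
    have he : 4 / (β - 4) * ((β - 4) / 4) = 1 := by field_simp
    rw [hCdef, ← Real.rpow_mul (div_nonneg hN0 hM.le), he, Real.rpow_one]
  have hlt : N2fun d p f < N2val d p := by
    have := mul_lt_mul_of_pos_left (hCpow ▸ hpow) hM
    rw [mul_comm M (N2val d p / M), div_mul_cancel₀ _ hM.ne'] at this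
    rw [hN2]
    exact this
  linarith

/-- invariance of `PW₋`: if `ψ₀ ∈ PW₋` (i.e. `ℋ(ψ₀) < ℬ(ψ₀)` and
`𝒦(ψ₀) < 0`) and `ψ` is the corresponding `H¹` solution of
`2i∂ₜψ + Δψ + |ψ|^{p−1}ψ = 0` on its maximal interval `I` (recorded through mass and
energy conservation and continuity of `t ↦ 𝒦(ψ(t))` on `I ∋ 0`), then
`𝒦(ψ(t)) < −(ℬ(ψ₀) − ℋ(ψ₀)) < 0` for all `t ∈ I`; in particular `ψ(t)` stays in
`PW₋`. -/
theorem PWminus_invariant (d : ℕ) (p : ℝ) (hd : 1 ≤ d)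
    (hp1 : 2 + 4 / (d : ℝ) < p + 1)
    (hp2 : 3 ≤ d → p + 1 < 2 * (d : ℝ) / ((d : ℝ) - 2))
    (I : Set ℝ) (hI0 : (0 : ℝ) ∈ I) (hIconn : I.OrdConnected)
    (ψ : ℝ → Euc d → ℂ)
    (hH1 : ∀ t ∈ I, InH1 d (ψ t))
    (hmemp : ∀ t ∈ I, MemLp (ψ t) (ENNReal.ofReal (p + 1)) (volume : Measure (Euc d)))
    (hne : ¬ ((ψ 0) =ᵐ[(volume : Measure (Euc d))] (0 : Euc d → ℂ)))
    (hmass : ∀ t ∈ I, ppow d 2 (ψ t) = ppow d 2 (ψ 0))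
    (henergy : ∀ t ∈ I, Hfun d p (ψ t) = Hfun d p (ψ 0))
    (hcont : ContinuousOn (fun t => Kfun d p (ψ t)) I)
    (hPW : Hfun d p (ψ 0) < Bfun d p (ψ 0))
    (hK0 : Kfun d p (ψ 0) < 0) :
    ∀ t ∈ I,
      Kfun d p (ψ t) < -(Bfun d p (ψ 0) - Hfun d p (ψ 0)) ∧
      0 < Bfun d p (ψ 0) - Hfun d p (ψ 0) ∧
      Hfun d p (ψ t) < Bfun d p (ψ t) := by
  have hd0 : (0:ℝ) < (d:ℝ) := by exact_mod_cast Nat.pos_of_ne_zero (by omega)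
  have hβ : 4 < (d : ℝ) * (p - 1) := by
    have h4d : 4 / (d:ℝ) < p - 1 := by linarith
    calc (4:ℝ) = (d:ℝ) * (4 / (d:ℝ)) := by field_simp
    _ < (d:ℝ) * (p - 1) := mul_lt_mul_of_pos_left h4d hd0
  have hp : (0:ℝ) < p + 1 := by
    have h4 : (0:ℝ) < 4 / (d:ℝ) := by positivity
    linarith
  have hBeq : ∀ t ∈ I, Bfun d p (ψ t) = Bfun d p (ψ 0) := by
    intro t ht
    unfold Bfun l2norm
    rw [hmass t ht]
  set ε := Bfun d p (ψ 0) - Hfun d p (ψ 0) with hε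
  have hεpos : 0 < ε := by simp only [hε]; linarith
  have hpp0 : 0 < ppow d 2 (ψ 0) := ppow2_pos d _ (hH1 0 hI0).1 hne
  have hAdm : ∀ t ∈ I, Adm d p (ψ t) := fun t ht =>
    ⟨hH1 t ht, hmemp t ht, ppow2_ne_ae d _ (by rw [hmass t ht]; exact hpp0)⟩
  have hK0' : Kfun d p (ψ 0) < -ε := by
    have := keyA d p hβ hp (ψ 0) (hAdm 0 hI0) hK0.le hPW
    simp only [hε]
    linarith
  have hmain : ∀ t ∈ I, Kfun d p (ψ t) < -ε := by
    intro t ht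
    by_contra hge
    push_neg at hge
    have hiv : ∃ s ∈ I, Kfun d p (ψ s) = -ε := by
      rcases le_total 0 t with h0t | ht0
      · have hsub : Icc (0:ℝ) t ⊆ I := hIconn.out hI0 ht
        obtain ⟨s, hs, hgs⟩ :=
          intermediate_value_Icc h0t (hcont.mono hsub) ⟨hK0'.le, hge⟩
        exact ⟨s, hsub hs, hgs⟩
      · have hsub : Icc t (0:ℝ) ⊆ I := hIconn.out ht hI0
        obtain ⟨s, hs, hgs⟩ :=
          intermediate_value_Icc' ht0 (hcont.mono hsub) ⟨hK0'.le, hge⟩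
        exact ⟨s, hsub hs, hgs⟩
    obtain ⟨s, hsI, hKs⟩ := hiv
    have hHBs : Hfun d p (ψ s) < Bfun d p (ψ s) := by
      rw [henergy s hsI, hBeq s hsI]; exact hPW
    have hk := keyA d p hβ hp (ψ s) (hAdm s hsI) (by rw [hKs]; linarith) hHBs
    rw [henergy s hsI, hBeq s hsI] at hk
    rw [hKs] at hk
    simp only [hε] at hk
    linarith
  intro t ht
  refine ⟨hmain t ht, hεpos, ?_⟩
  rw [henergy t ht, hBeq t ht]; exact hPW
end
end

section
/- Assume d ≥ 1 and 2 + 4/d < p + 1 < 2*. Let Q_ω be the ground state of ΔQ − ωQ + |Q|^{p−1}Q = 0 for ω > 0 (so 𝒦(Q_ω) = 0 and 𝒩₂(Q_ω) = N₂). Then Q_ω lies in the closure of PW₊ and in the closure of PW₋ in the H¹-topology: for every ε > 0 there exist f₊ ∈ PW₊ and f₋ ∈ PW₋ with ‖Q_ω − f_±‖_{H¹} ≤ ε. In fact f_± = (1 ∓ ε/‖Q_ω‖_{H¹}) Q_ω work. -/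
open MeasureTheory Filter Set
open scoped ENNReal Topology

noncomputable section

def PWset (d : ℕ) (p : ℝ) : Set (Euc d → ℂ) :=
  {f | Adm d p f ∧ Hfun d p f < Bfun d p f}

def PWplus (d : ℕ) (p : ℝ) : Set (Euc d → ℂ) :=
  {f | f ∈ PWset d p ∧ 0 < Kfun d p f}

def PWminus (d : ℕ) (p : ℝ) : Set (Euc d → ℂ) :=
  {f | f ∈ PWset d p ∧ Kfun d p f < 0}

/-- H¹ norm. -/
def h1norm (d : ℕ) (f : Euc d → ℂ) : ℝ := Real.sqrt (ppow d 2 f + gradSq d f)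

/-- The Laplacian `Δf(x) = ∑ᵢ ∂²f/∂xᵢ²(x)`. -/
def lap (d : ℕ) (f : Euc d → ℂ) (x : Euc d) : ℂ :=
  ∑ i : Fin d,
    fderiv ℝ (fun y => fderiv ℝ f y (EuclideanSpace.single i 1)) x (EuclideanSpace.single i 1)


section Aux

lemma amgm_strict {a b w v : ℝ} (ha : 0 < a) (hb : 0 < b) (hab : a ≠ b)
    (hw : 0 < w) (hv : 0 < v) (hwv : w + v = 1) :
    a ^ w * b ^ v < w * a + v * b := by
  have hlog : Real.log a ≠ Real.log b := fun h => hab (by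
    rw [← Real.exp_log ha, ← Real.exp_log hb, h])
  have h := strictConvexOn_exp.2 (Set.mem_univ (Real.log a)) (Set.mem_univ (Real.log b))
    hlog hw hv hwv
  simp only [smul_eq_mul, Real.exp_log ha, Real.exp_log hb] at h
  calc a ^ w * b ^ v = Real.exp (w * Real.log a + v * Real.log b) := by
        rw [Real.exp_add, Real.rpow_def_of_pos ha, Real.rpow_def_of_pos hb,
          mul_comm (Real.log a) w, mul_comm (Real.log b) v]
    _ < w * a + v * b := h

lemma gradSq_smul (d : ℕ) (Q : Euc d → ℂ) (hdiff : Differentiable ℝ Q) (s : ℝ) :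
    gradSq d (fun x => (s : ℂ) * Q x) = s ^ 2 * gradSq d Q := by
  unfold gradSq
  rw [← integral_const_mul]
  congr 1; funext x
  rw [fderiv_const_mul (hdiff x)]
  simp [norm_smul, mul_pow, sq_abs]

lemma ppow_smul (d : ℕ) (q : ℝ) (Q : Euc d → ℂ) (s : ℝ) :
    ppow d q (fun x => (s : ℂ) * Q x) = |s| ^ q * ppow d q Q := by
  unfold ppow
  rw [← integral_const_mul]
  congr 1; funext x
  rw [norm_mul, Complex.norm_real, Real.norm_eq_abs,
    Real.mul_rpow (abs_nonneg s) (norm_nonneg _)]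

lemma l2norm_smul (d : ℕ) (Q : Euc d → ℂ) (s : ℝ) :
    l2norm d (fun x => (s : ℂ) * Q x) = |s| * l2norm d Q := by
  unfold l2norm
  rw [ppow_smul, show |s| ^ (2:ℝ) = |s| ^ (2:ℕ) from Real.rpow_natCast _ 2,
    Real.sqrt_mul (sq_nonneg _), Real.sqrt_sq_eq_abs, abs_abs]

lemma ppow_pos (d : ℕ) (q : ℝ) (hq : q ≠ 0) (Q : Euc d → ℂ)
    (hint : Integrable (fun x => ‖Q x‖ ^ q) (volume : Measure (Euc d)))
    (hne : ¬ (Q =ᵐ[(volume : Measure (Euc d))] (0 : Euc d → ℂ))) :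
    0 < ppow d q Q := by
  have h0 : 0 ≤ fun x : Euc d => ‖Q x‖ ^ q := fun x => Real.rpow_nonneg (norm_nonneg _) q
  rcases lt_or_eq_of_le (integral_nonneg h0) with h | h
  · exact h
  · exfalso; apply hne
    have hz := (integral_eq_zero_iff_of_nonneg h0 hint).mp h.symm
    filter_upwards [hz] with x hx
    have hx' : ‖Q x‖ = 0 := (Real.rpow_eq_zero (norm_nonneg _) hq).mp hx
    simpa using hx'

lemma real_key {s dd p G P L : ℝ} (hs : 0 < s) (hs1 : s ≠ 1) (hdd : 0 < dd)
    (hp1 : 1 < p) (hD4 : 4 < dd * (p - 1)) (hα : 0 < p + 1 - dd * (p - 1) / 2)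
    (hG : 0 < G) (hL : 0 < L) (hGeq : G = dd * (p - 1) / (2 * (p + 1)) * P) :
    s ^ 2 * G - 2 / (p + 1) * (s ^ (p + 1) * P) <
      (dd * (p - 1) - 4) / (dd * (p - 1)) *
        ((L ^ (p + 1 - dd * (p - 1) / 2) * Real.sqrt G ^ (dd * (p - 1) / 2 - 2)) /
            (s * L) ^ (p + 1 - dd * (p - 1) / 2)) ^ (4 / (dd * (p - 1) - 4)) := by
  set D := dd * (p - 1) with hD
  set A := p + 1 - D / 2 with hA
  set B := D - 4 with hB
  have hDpos : 0 < D := by nlinarith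
  have hBpos : 0 < B := by rw [hB]; linarith
  have hpp : (0:ℝ) < p + 1 := by linarith
  have hsA : 0 < s ^ A := Real.rpow_pos_of_pos hs A
  have hLA : 0 < L ^ A := Real.rpow_pos_of_pos hL A
  have hDB : D = B + 4 := by rw [hB]; ring
  have hquot : (L ^ A * Real.sqrt G ^ (D / 2 - 2)) / (s * L) ^ A
      = Real.sqrt G ^ (D / 2 - 2) * s ^ (-A) := by
    rw [Real.mul_rpow hs.le hL.le, Real.rpow_neg hs.le]
    field_simp [hsA.ne', hLA.ne']
  rw [hquot]
  have hpow : (Real.sqrt G ^ (D / 2 - 2) * s ^ (-A)) ^ (4 / B)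
      = G * s ^ (-A * (4 / B)) := by
    rw [Real.mul_rpow (Real.rpow_nonneg (Real.sqrt_nonneg G) _) (Real.rpow_nonneg hs.le _),
      ← Real.rpow_mul (Real.sqrt_nonneg G), ← Real.rpow_mul hs.le]
    congr 1
    rw [show (D / 2 - 2) * (4 / B) = 2 by rw [hDB]; field_simp; ring]
    rw [show (2:ℝ) = ((2:ℕ):ℝ) by norm_num, Real.rpow_natCast, Real.sq_sqrt hG.le]
  rw [hpow]
  have ha : 0 < s ^ (-A * (4 / B)) := Real.rpow_pos_of_pos hs _
  have hb : 0 < s ^ (p + 1) := Real.rpow_pos_of_pos hs _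
  have hab : s ^ (-A * (4 / B)) ≠ s ^ (p + 1) := by
    intro h
    have hls : Real.log s ≠ 0 := by
      intro h0
      rcases Real.log_eq_zero.mp h0 with h' | h' | h' <;> [linarith; exact hs1 h'; linarith]
    have h2 := congrArg Real.log h
    rw [Real.log_rpow hs, Real.log_rpow hs] at h2
    have he : -A * (4 / B) = p + 1 := mul_right_cancel₀ hls h2
    have hApos : 0 < A * (4 / B) := by positivity
    nlinarith
  have hwv : B / D + 4 / D = 1 := by
    rw [← add_div, show B + 4 = D from by rw [hB]; ring]
    exact div_self hDpos.ne'
  have hamgm := amgm_strict ha hb hab (div_pos hBpos hDpos)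
    (div_pos (by norm_num) hDpos) hwv
  have hlhs : (s ^ (-A * (4 / B))) ^ (B / D) * (s ^ (p + 1)) ^ (4 / D) = s ^ 2 := by
    rw [← Real.rpow_mul hs.le, ← Real.rpow_mul hs.le, ← Real.rpow_add hs]
    rw [show -A * (4 / B) * (B / D) + (p + 1) * (4 / D) = 2 by
      rw [hA, hDB]; field_simp; ring]
    rw [show (2:ℝ) = ((2:ℕ):ℝ) by norm_num, Real.rpow_natCast]
  rw [hlhs] at hamgm
  have hPeq : P = 2 * (p + 1) / D * G := by
    rw [hGeq]
    field_simp
  rw [hPeq]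
  have hcoef : 2 / (p + 1) * (s ^ (p + 1) * (2 * (p + 1) / D * G))
      = 4 / D * (s ^ (p + 1) * G) := by
    field_simp
    ring
  rw [hcoef]
  nlinarith [mul_lt_mul_of_pos_right hamgm hG]

end Aux

/-- instability of the ground state: let `Q = Q_ω` be the ground state of
`ΔQ − ωQ + |Q|^{p−1}Q = 0` (so `𝒦(Q) = 0` and `𝒩₂(Q) = N₂`).  Then `Q` lies in the
`H¹`-closure of both `PW₊` and `PW₋`: for every `ε > 0` there exist scalar multiples
`s₊ Q ∈ PW₊` and `s₋ Q ∈ PW₋` with `‖Q − s_± Q‖_{H¹} ≤ ε`. -/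
theorem ground_state_instability (d : ℕ) (p : ℝ) (hd : 1 ≤ d)
    (hp1 : 2 + 4 / (d : ℝ) < p + 1)
    (hp2 : 3 ≤ d → p + 1 < 2 * (d : ℝ) / ((d : ℝ) - 2))
    (ω : ℝ) (hω : 0 < ω)
    (Q : Euc d → ℂ) (hsm : ContDiff ℝ 2 Q) (hAdm : Adm d p Q)
    (hPDE : ∀ x, lap d Q x - (ω : ℂ) * Q x + ((‖Q x‖ ^ (p - 1) : ℝ) : ℂ) * Q x = 0)
    (hK : Kfun d p Q = 0) (hN2 : N2fun d p Q = N2val d p) :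
    ∀ ε : ℝ, 0 < ε → ∃ splus sminus : ℝ,
      (fun x => (splus : ℂ) * Q x) ∈ PWplus d p ∧
      (fun x => (sminus : ℂ) * Q x) ∈ PWminus d p ∧
      h1norm d (fun x => Q x - (splus : ℂ) * Q x) ≤ ε ∧
      h1norm d (fun x => Q x - (sminus : ℂ) * Q x) ≤ ε := by
  intro ε hε
  obtain ⟨⟨hL2, hQd, hGint⟩, hLp, hne⟩ := hAdm
  have hd0 : (0:ℝ) < d := by
    have h1 : (1:ℝ) ≤ d := by exact_mod_cast hd
    linarith
  have hp1' : (1:ℝ) < p := by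
    have h4 : (0:ℝ) < 4 / d := by positivity
    linarith
  have hpp : (0:ℝ) < p + 1 := by linarith
  have hD4 : 4 < (d:ℝ) * (p - 1) := by
    have h1 : 4 / (d:ℝ) < p - 1 := by linarith
    have h2 := (div_lt_iff₀ hd0).mp h1
    linarith [h2]
  have hαpos : 0 < p + 1 - (d:ℝ) * (p - 1) / 2 := by
    rcases le_or_gt 3 d with h3 | h3
    · have hd2 : (2:ℝ) < d := by
        have h3' : (3:ℝ) ≤ d := by exact_mod_cast h3
        linarith
      have h := hp2 h3
      have h2 := (lt_div_iff₀ (by linarith : (0:ℝ) < (d:ℝ) - 2)).mp h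
      nlinarith
    · have hd2 : (d:ℝ) ≤ 2 := by exact_mod_cast Nat.lt_succ_iff.mp h3
      nlinarith
  have hPint : Integrable (fun x => ‖Q x‖ ^ (p + 1)) (volume : Measure (Euc d)) := by
    have h := hLp.integrable_norm_rpow
      (by simp only [ne_eq, ENNReal.ofReal_eq_zero, not_le]; linarith) ENNReal.ofReal_ne_top
    rwa [ENNReal.toReal_ofReal (by linarith : (0:ℝ) ≤ p + 1)] at h
  have hPpos : 0 < ppow d (p + 1) Q :=
    ppow_pos d (p + 1) (by linarith) Q hPint hne
  have hGeq : gradSq d Q = (d:ℝ) * (p - 1) / (2 * (p + 1)) * ppow d (p + 1) Q := by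
    unfold Kfun at hK; linarith
  have hGpos : 0 < gradSq d Q := by
    rw [hGeq]
    exact mul_pos (div_pos (mul_pos hd0 (by linarith)) (by linarith)) hPpos
  have h2int : Integrable (fun x => ‖Q x‖ ^ (2:ℝ)) (volume : Measure (Euc d)) := by
    have h := hL2.integrable_norm_rpow (by norm_num) ENNReal.ofNat_ne_top
    simpa using h
  have hP2pos : 0 < ppow d 2 Q := ppow_pos d 2 (by norm_num) Q h2int hne
  have hLpos : 0 < l2norm d Q := Real.sqrt_pos.mpr hP2pos
  have hH1pos : 0 < h1norm d Q := Real.sqrt_pos.mpr (by linarith)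
  -- the scaling factor
  set δ := min (1/2) (ε / h1norm d Q) with hδ
  have hδpos : 0 < δ := lt_min (by norm_num) (div_pos hε hH1pos)
  have hδhalf : δ ≤ 1/2 := min_le_left _ _
  have hδε : δ * h1norm d Q ≤ ε := by
    have h := min_le_right (1/2) (ε / h1norm d Q)
    calc δ * h1norm d Q ≤ (ε / h1norm d Q) * h1norm d Q :=
          mul_le_mul_of_nonneg_right h hH1pos.le
      _ = ε := by field_simp
  -- Kfun of scalar multiples
  have hKval : ∀ s : ℝ, 0 < s →
      Kfun d p (fun x => (s:ℂ) * Q x) = (s ^ 2 - s ^ (p + 1)) * gradSq d Q := by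
    intro s hs
    unfold Kfun
    rw [gradSq_smul d Q hQd, ppow_smul, abs_of_pos hs, hGeq]
    ring
  -- membership in PWset
  have hmem : ∀ s : ℝ, 0 < s → s ≠ 1 → (fun x => (s:ℂ) * Q x) ∈ PWset d p := by
    intro s hs hs1
    refine ⟨⟨⟨hL2.const_mul _, hQd.const_mul _, ?_⟩, hLp.const_mul _, ?_⟩, ?_⟩
    · have heq : (fun x => ‖fderiv ℝ (fun y => (s:ℂ) * Q y) x‖ ^ 2)
          = fun x => s ^ 2 * ‖fderiv ℝ Q x‖ ^ 2 := by
        funext x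
        rw [fderiv_const_mul (hQd x)]
        simp [norm_smul, mul_pow, sq_abs]
      rw [heq]
      exact hGint.const_mul _
    · intro hcontra
      apply hne
      have hs0 : (s:ℂ) ≠ 0 := by
        simp only [ne_eq, Complex.ofReal_eq_zero]
        exact hs.ne'
      filter_upwards [hcontra] with x hx
      simp only [Pi.zero_apply] at hx ⊢
      exact (mul_eq_zero.mp hx).resolve_left hs0
    · have hH : Hfun d p (fun x => (s:ℂ) * Q x)
          = s ^ 2 * gradSq d Q - 2 / (p + 1) * (s ^ (p + 1) * ppow d (p + 1) Q) := by
        unfold Hfun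
        rw [gradSq_smul d Q hQd, ppow_smul, abs_of_pos hs]
      rw [hH]
      unfold Bfun
      rw [l2norm_smul d Q s, abs_of_pos hs, ← hN2]
      unfold N2fun
      exact real_key hs hs1 hd0 hp1' hD4 hαpos hGpos hLpos hGeq
  -- h1norm of differences
  have hdiffnorm : ∀ s : ℝ, h1norm d (fun x => Q x - (s:ℂ) * Q x) = |1 - s| * h1norm d Q := by
    intro s
    have heq : (fun x => Q x - (s:ℂ) * Q x) = (fun x => ((1 - s : ℝ):ℂ) * Q x) := by
      funext x
      push_cast
      ring
    rw [heq]
    unfold h1norm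
    rw [ppow_smul, gradSq_smul d Q hQd,
      show |1 - s| ^ (2:ℝ) = |1 - s| ^ (2:ℕ) from Real.rpow_natCast _ 2, sq_abs,
      ← mul_add, Real.sqrt_mul (sq_nonneg _), Real.sqrt_sq_eq_abs]
  refine ⟨1 - δ, 1 + δ, ?_, ?_, ?_, ?_⟩
  · refine ⟨hmem (1 - δ) (by linarith) (by intro h; linarith [hδpos, h]), ?_⟩
    rw [hKval (1 - δ) (by linarith)]
    apply mul_pos _ hGpos
    have hlt : (1 - δ) ^ (p + 1) < (1 - δ) ^ ((2:ℕ):ℝ) :=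
      Real.rpow_lt_rpow_of_exponent_gt (by linarith) (by linarith)
        (by push_cast; linarith)
    rw [Real.rpow_natCast] at hlt
    linarith
  · refine ⟨hmem (1 + δ) (by linarith) (by intro h; linarith [hδpos]), ?_⟩
    rw [hKval (1 + δ) (by linarith)]
    apply mul_neg_of_neg_of_pos _ hGpos
    have hlt : (1 + δ) ^ ((2:ℕ):ℝ) < (1 + δ) ^ (p + 1) :=
      Real.rpow_lt_rpow_of_exponent_lt (by linarith) (by push_cast; linarith)
    rw [Real.rpow_natCast] at hlt
    linarith
  · rw [hdiffnorm]
    rw [show |1 - (1 - δ)| = δ from by rw [show (1:ℝ) - (1 - δ) = δ from by ring, abs_of_pos hδpos]]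
    exact hδε
  · rw [hdiffnorm]
    rw [show |1 - (1 + δ)| = δ from by rw [show (1:ℝ) - (1+δ) = -δ from by ring, abs_neg, abs_of_pos hδpos]]
    exact hδε
end
end
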